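/- Every finitely generated normal subgroup of a free group of rank 2 is either trivial or of finite index. -/

import Mathlib

namespace GreenbergAux
open FreeGroup List

variable {α : Type*} [DecidableEq α]
set_option linter.unusedSectionVars false

/-- negation of a letter -/
def neg (x : α × Bool) : α × Bool := (x.1, !x.2)

lemma neg_neg (x : α × Bool) : neg (neg x) = x := by simp [neg]

/-- relation: two adjacent letters do not cancel -/
def RL (p q : α × Bool) : Prop := ¬(p.1 = q.1 ∧ p.2 = !q.2)

lemma rl_iff (a b : α × Bool) : RL a b ↔ a ≠ neg b := by
  constructor
  · rintro h rfl; exact h ⟨rfl, rfl⟩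
  · rintro h ⟨h1, h2⟩; exact h (Prod.ext h1 h2)

lemma rl_iff' (a b : α × Bool) : RL a b ↔ b ≠ neg a := by
  rw [rl_iff]
  constructor
  · rintro h rfl; exact h (by simp [neg])
  · rintro h rfl; exact h (by simp [neg])

/-- a word is reduced -/
def Reduced (l : List (α × Bool)) : Prop := List.Chain' RL l

lemma reduced_reduce (l : List (α × Bool)) : Reduced (reduce l) := by
  induction l with
  | nil => simp [Reduced, List.Chain']
  | cons x t ih =>
    rw [reduce.cons]
    rcases h : reduce t with _ | ⟨hd, tl⟩
    · simp [Reduced, List.Chain']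
    · rw [h] at ih
      show Reduced (if x.1 = hd.1 ∧ x.2 = !hd.2 then tl else x :: hd :: tl)
      by_cases hc : x.1 = hd.1 ∧ x.2 = !hd.2
      · rw [if_pos hc]; exact ih.tail
      · rw [if_neg hc]; exact (List.isChain_cons_cons).2 ⟨hc, ih⟩

lemma reduce_eq_self (l : List (α × Bool)) (h : Reduced l) : reduce l = l := by
  induction l with
  | nil => rfl
  | cons x t ih =>
    have ht : reduce t = t := ih h.tail
    rw [reduce.cons, ht]
    rcases t with _ | ⟨hd, tl⟩
    · rfl
    · show (if x.1 = hd.1 ∧ x.2 = !hd.2 then tl else x :: hd :: tl) = x :: hd :: tl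
      rw [if_neg ((List.isChain_cons_cons).1 h).1]

lemma toWord_mk_reduced {l : List (α × Bool)} (h : Reduced l) : (mk l).toWord = l := by
  rw [toWord_mk, reduce_eq_self l h]

lemma reduced_toWord (x : FreeGroup α) : Reduced x.toWord := by
  rw [← reduce_toWord]; exact reduced_reduce _

lemma invRev_eq (l : List (α × Bool)) : invRev l = (l.map neg).reverse := by
  simp [invRev, neg]

lemma reduced_invRev {l : List (α × Bool)} (h : Reduced l) : Reduced (invRev l) := by
  have h2 : reduce (invRev l) = invRev l := by rw [reduce_invRev, reduce_eq_self l h]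
  rw [← h2]; exact reduced_reduce _

lemma invRev_head? (l : List (α × Bool)) : (invRev l).head? = l.getLast?.map neg := by
  rw [invRev_eq, List.head?_reverse, List.getLast?_map]

lemma invRev_getLast? (l : List (α × Bool)) : (invRev l).getLast? = l.head?.map neg := by
  rw [invRev_eq, List.getLast?_reverse, List.head?_map]

lemma invRev_append (l m : List (α × Bool)) :
    invRev (l ++ m) = invRev m ++ invRev l := by
  simp [invRev_eq]


/-- longest common prefix -/
def lcp : List (α × Bool) → List (α × Bool) → List (α × Bool)
  | a :: l, b :: m => if a = b then a :: lcp l m else []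
  | _, _ => []

lemma lcp_spec : ∀ l m : List (α × Bool), ∃ t1 t2,
    l = lcp l m ++ t1 ∧ m = lcp l m ++ t2 ∧
    ∀ a ∈ t1.head?, ∀ b ∈ t2.head?, a ≠ b := by
  intro l
  induction l with
  | nil =>
    intro m
    refine ⟨[], m, by cases m <;> simp [lcp], by cases m <;> simp [lcp], by simp⟩
  | cons a l ih =>
    intro m
    rcases m with _ | ⟨b, m⟩
    · exact ⟨a :: l, [], by simp [lcp], by simp [lcp], by simp⟩
    · by_cases hab : a = b
      · subst hab
        obtain ⟨t1, t2, h1, h2, h3⟩ := ih m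
        exact ⟨t1, t2, by rw [lcp, if_pos rfl]; simpa using h1,
          by rw [lcp, if_pos rfl]; simpa using h2, h3⟩
      · refine ⟨a :: l, b :: m, by rw [lcp, if_neg hab]; simp,
          by rw [lcp, if_neg hab]; simp, ?_⟩
        simp only [List.head?_cons, Option.mem_some_iff]
        rintro x rfl y rfl; exact hab

/-- key computation: cancellation in `y⁻¹ * z` given common-prefix decompositions -/
lemma toWord_inv_mul {y z : FreeGroup α} {c t1 t2 : List (α × Bool)}
    (hy : y.toWord = c ++ t1) (hz : z.toWord = c ++ t2)
    (hh : ∀ a ∈ t1.head?, ∀ b ∈ t2.head?, a ≠ b) :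
    (y⁻¹ * z).toWord = invRev t1 ++ t2 := by
  have ht1 : Reduced t1 := (hy ▸ reduced_toWord y).suffix (List.suffix_append c t1)
  have ht2 : Reduced t2 := (hz ▸ reduced_toWord z).suffix (List.suffix_append c t2)
  have e : y⁻¹ * z = mk (invRev t1 ++ t2) := by
    calc y⁻¹ * z = (mk c * mk t1)⁻¹ * (mk c * mk t2) := by
          rw [mul_mk, mul_mk, ← hy, ← hz, mk_toWord, mk_toWord]
      _ = (mk t1)⁻¹ * mk t2 := by group
      _ = mk (invRev t1 ++ t2) := by rw [inv_mk, mul_mk]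
  rw [e]
  apply toWord_mk_reduced
  refine (List.isChain_append).2 ⟨reduced_invRev ht1, ht2, ?_⟩
  intro x hx b hb
  rw [invRev_getLast?, Option.mem_map] at hx
  obtain ⟨a, ha, rfl⟩ := hx
  exact (rl_iff' (neg a) b).2 (by rw [neg_neg]; exact fun hba => (hh a ha b hb) hba.symm)

/-- the tree lemma: if `g` is on the geodesic `[1, z]`, then for any `y`,
`g` is on `[1, y]` or on `[y, z]`. -/
lemma tree {g z : FreeGroup α} (h : g.toWord <+: z.toWord) (y : FreeGroup α) :
    g.toWord <+: y.toWord ∨ (y⁻¹ * g).toWord <+: (y⁻¹ * z).toWord := by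
  obtain ⟨t1, t2, hy, hz, hh⟩ := lcp_spec y.toWord z.toWord
  set c := lcp y.toWord z.toWord with hc
  rcases List.prefix_or_prefix_of_prefix h ⟨t2, hz.symm⟩ with hpc | hcp
  · left; exact hpc.trans ⟨t1, hy.symm⟩
  · obtain ⟨t1', hp⟩ := hcp
    rcases eq_or_ne t1' [] with rfl | ht1'
    · left; rw [← hp, List.append_nil]; exact ⟨t1, hy.symm⟩
    · right
      have ht12 : t1' <+: t2 := by
        rw [← List.prefix_append_right_inj c, hp, ← hz]; exact h
      have hhead : t1'.head? = t2.head? := by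
        obtain ⟨r, hr⟩ := ht12
        rcases t1' with _ | ⟨x, t⟩
        · exact absurd rfl ht1'
        · rw [← hr]; rfl
      have hgg : (y⁻¹ * g).toWord = invRev t1 ++ t1' :=
        toWord_inv_mul hy hp.symm (fun a ha b hb => hh a ha b (hhead ▸ hb))
      have hzg : (y⁻¹ * z).toWord = invRev t1 ++ t2 := toWord_inv_mul hy hz hh
      rw [hgg, hzg, List.prefix_append_right_inj]
      exact ht12
/-- coarse connectivity: if `g` is geodesically between `1` and a product of
short elements of `N`, then some element of `N` is close to `g`. -/
lemma chain {N : Subgroup (FreeGroup α)} (Lb : ℕ) (g : FreeGroup α) :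
    ∀ l : List (FreeGroup α), (∀ s ∈ l, s ∈ N ∧ norm s ≤ Lb) →
    ∀ p : FreeGroup α, p ∈ N → (p⁻¹ * g).toWord <+: l.prod.toWord →
    ∃ m ∈ N, norm (m⁻¹ * g) ≤ Lb := by
  intro l
  induction l with
  | nil =>
    intro _ p hp hpre
    refine ⟨p, hp, ?_⟩
    rw [List.prod_nil, toWord_one, List.prefix_nil] at hpre
    show (p⁻¹ * g).toWord.length ≤ Lb
    simp [hpre]
  | cons s t ih =>
    intro hmem p hp hpre
    rw [List.prod_cons] at hpre
    rcases tree hpre s with h1 | h2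
    · refine ⟨p, hp, ?_⟩
      calc norm (p⁻¹ * g) ≤ s.toWord.length := h1.length_le
        _ ≤ Lb := (hmem s (List.mem_cons_self)).2
    · have hstep : ((p * s)⁻¹ * g).toWord <+: t.prod.toWord := by
        rw [mul_inv_rev, mul_assoc]
        have : s⁻¹ * (s * t.prod) = t.prod := by group
        rw [← this]
        exact h2
      exact ih (fun x hx => hmem x (List.mem_cons_of_mem s hx)) (p * s)
        (N.mul_mem hp (hmem s (List.mem_cons_self)).1) hstep
end GreenbergAux
open FreeGroup List GreenbergAux in
theorem fg_normal_subgroup_of_free_rank_two_trivial_or_finite_index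
    (N : Subgroup (FreeGroup (Fin 2))) [N.Normal] (hfg : N.FG) :
    N = ⊥ ∨ N.FiniteIndex := by
  by_cases hbot : N = ⊥
  · exact Or.inl hbot
  right
  by_contra hI
  -- the quotient is infinite
  have hidx : N.index = 0 := by by_contra h0; exact hI ⟨h0⟩
  have hinf : Infinite (FreeGroup (Fin 2) ⧸ N) := by
    rw [Subgroup.index_eq_card] at hidx
    rcases Nat.card_eq_zero.mp hidx with he | h
    · exact absurd he (not_isEmpty_of_nonempty _)
    · exact h
  -- generators and bound Lb
  obtain ⟨S, hS, hSfin⟩ := (Subgroup.fg_iff N).mp hfg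
  set Lb : ℕ := hSfin.toFinset.sup FreeGroup.norm with hLb
  -- the ball of radius Lb is finite
  have hball : {x : FreeGroup (Fin 2) | FreeGroup.norm x ≤ Lb}.Finite := by
    apply Set.Finite.of_finite_image (f := toWord)
    · apply (List.finite_length_le (Fin 2 × Bool) Lb).subset
      rintro _ ⟨x, hx, rfl⟩; exact hx
    · exact fun a _ b _ h => toWord_injective h
  -- a coset all of whose elements are long
  obtain ⟨q, hq⟩ : ∃ q : FreeGroup (Fin 2) ⧸ N,
      q ∉ QuotientGroup.mk '' {x | FreeGroup.norm x ≤ Lb} := by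
    by_contra hall; push_neg at hall
    exact Set.infinite_univ ((hball.image _).subset fun q _ => hall q)
  obtain ⟨g, hgq⟩ := QuotientGroup.mk_surjective q
  have hlong : ∀ h : FreeGroup (Fin 2), (h : FreeGroup (Fin 2) ⧸ N) = q → Lb < FreeGroup.norm h := by
    intro h hh
    by_contra hle; push_neg at hle
    exact hq ⟨h, hle, hh⟩
  have hgne : g.toWord ≠ [] := by
    intro h
    have h1 := hlong g hgq
    have h2 : FreeGroup.norm g = 0 := FreeGroup.norm_eq_zero.2 (toWord_eq_nil_iff.1 h)
    omega
  set ℓ : Fin 2 × Bool := g.toWord.getLast hgne with hℓ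
  -- a nontrivial element of N
  obtain ⟨u, huN, hune⟩ : ∃ u ∈ N, u ≠ 1 := by
    by_contra hall; push_neg at hall
    exact hbot ((Subgroup.eq_bot_iff_forall N).mpr hall)
  have hune' : u.toWord ≠ [] := fun h => hune (toWord_eq_nil_iff.mp h)
  -- choose a letter c avoiding three forbidden values
  obtain ⟨c, hc1, hc2, hc3⟩ : ∃ c : Fin 2 × Bool, c ≠ neg ℓ ∧
      c ≠ neg (u.toWord.head hune') ∧ c ≠ u.toWord.getLast hune' := by
    by_contra hall; push_neg at hall
    set x := neg ℓ; set y := neg (u.toWord.head hune'); set z := u.toWord.getLast hune'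
    have hsub : (Finset.univ : Finset (Fin 2 × Bool)) ⊆ {x, y, z} := by
      intro d _
      simp only [Finset.mem_insert, Finset.mem_singleton]
      rcases eq_or_ne d x with h | h
      · exact Or.inl h
      · rcases eq_or_ne d y with h' | h'
        · exact Or.inr (Or.inl h')
        · exact Or.inr (Or.inr (hall d h h'))
    have h4 : (Finset.univ : Finset (Fin 2 × Bool)).card = 4 := by decide
    have h3 : ({x, y, z} : Finset (Fin 2 × Bool)).card ≤ 3 := by
      calc ({x, y, z} : Finset (Fin 2 × Bool)).card
          ≤ ({y, z} : Finset (Fin 2 × Bool)).card + 1 := Finset.card_insert_le _ _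
        _ ≤ (({z} : Finset (Fin 2 × Bool)).card + 1) + 1 :=
            Nat.add_le_add_right (Finset.card_insert_le _ _) 1
        _ = 3 := by rw [Finset.card_singleton]
    have := Finset.card_le_card hsub
    omega
  -- the conjugated element v
  set v : FreeGroup (Fin 2) := mk [c] * u * (mk [c])⁻¹ with hv
  have hvN : v ∈ N := ‹N.Normal›.conj_mem u huN (mk [c])
  have hvred : Reduced ([c] ++ u.toWord ++ [neg c]) := by
    refine List.isChain_append.2 ⟨List.isChain_append.2
      ⟨List.isChain_singleton c, reduced_toWord u, ?_⟩, List.isChain_singleton _, ?_⟩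
    · intro a ha b hb
      have ha' : a = c := by simpa [eq_comm] using ha
      rw [List.head?_eq_head hune', Option.mem_some_iff] at hb
      subst ha'; subst hb
      exact (rl_iff _ _).2 fun h => hc2 (by rw [h])
    · intro a ha b hb
      rw [List.getLast?_append_of_ne_nil _ hune', List.getLast?_eq_getLast hune',
        Option.mem_some_iff] at ha
      simp only [List.head?_cons, Option.mem_some_iff] at hb
      subst ha; subst hb
      exact (rl_iff _ _).2 fun h => hc3 (by rw [GreenbergAux.neg_neg] at h; exact h.symm)
  have hvword : v.toWord = [c] ++ u.toWord ++ [neg c] := by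
    have e : v = mk ([c] ++ u.toWord ++ [neg c]) := by
      calc v = mk [c] * mk u.toWord * mk (invRev [c]) := by
            rw [mk_toWord, ← inv_mk]
        _ = mk ([c] ++ u.toWord ++ invRev [c]) := by rw [mul_mk, mul_mk]
        _ = mk ([c] ++ u.toWord ++ [neg c]) := by norm_num [invRev_eq, neg]
    rw [e]; exact toWord_mk_reduced hvred
  -- the element n = g v g⁻¹ and its reduced word
  set n : FreeGroup (Fin 2) := g * v * g⁻¹ with hn
  have hnN : n ∈ N := ‹N.Normal›.conj_mem v hvN g
  have hvne : v.toWord ≠ [] := by rw [hvword]; simp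
  have hnred : Reduced (g.toWord ++ v.toWord ++ invRev g.toWord) := by
    refine List.isChain_append.2 ⟨List.isChain_append.2
      ⟨reduced_toWord g, reduced_toWord v, ?_⟩, reduced_invRev (reduced_toWord g), ?_⟩
    · intro a ha b hb
      rw [List.getLast?_eq_getLast hgne, Option.mem_some_iff] at ha
      rw [hvword] at hb
      simp only [List.cons_append, List.head?_cons, Option.mem_some_iff] at hb
      subst ha; subst hb
      have : RL ℓ c := (rl_iff _ _).2 fun h => hc1 (by rw [h, GreenbergAux.neg_neg])
      exact this
    · intro a ha b hb
      rw [List.getLast?_append_of_ne_nil _ hvne, hvword, List.getLast?_concat,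
        Option.mem_some_iff] at ha
      rw [invRev_head?, List.getLast?_eq_getLast hgne, Option.map_some,
        Option.mem_some_iff] at hb
      subst ha; subst hb
      have : RL (neg c) (neg ℓ) := by
        refine (rl_iff _ _).2 fun h => hc1 ?_
        have h2 : neg (neg c) = neg (neg (neg ℓ)) := by rw [h]
        rw [GreenbergAux.neg_neg, GreenbergAux.neg_neg] at h2
        exact h2
      exact this
  have hnword : n.toWord = g.toWord ++ v.toWord ++ invRev g.toWord := by
    have e : n = mk (g.toWord ++ v.toWord ++ invRev g.toWord) := by
      calc n = mk g.toWord * mk v.toWord * mk (invRev g.toWord) := by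
            rw [mk_toWord, mk_toWord, ← inv_mk, mk_toWord]
        _ = mk (g.toWord ++ v.toWord ++ invRev g.toWord) := by rw [mul_mk, mul_mk]
    rw [e]; exact toWord_mk_reduced hnred
  have hpre : g.toWord <+: n.toWord := by
    rw [hnword, List.append_assoc]; exact List.prefix_append _ _
  -- write n as a product of short generators
  have hnm : n ∈ Submonoid.closure (S ∪ S⁻¹) := by
    rw [← Subgroup.closure_toSubmonoid]
    exact (show n ∈ Subgroup.closure S from hS.symm ▸ hnN)
  obtain ⟨lst, hlst, hprod⟩ := Submonoid.exists_list_of_mem_closure hnm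
  have hmem : ∀ s ∈ lst, s ∈ N ∧ FreeGroup.norm s ≤ Lb := by
    intro s hs
    rcases hlst s hs with h | h
    · exact ⟨hS ▸ Subgroup.subset_closure h, Finset.le_sup (hSfin.mem_toFinset.2 h)⟩
    · rw [Set.mem_inv] at h
      refine ⟨?_, ?_⟩
      · have : s⁻¹ ∈ N := hS ▸ Subgroup.subset_closure h
        simpa using N.inv_mem this
      · calc FreeGroup.norm s = FreeGroup.norm s⁻¹ := norm_inv_eq.symm
          _ ≤ Lb := Finset.le_sup (hSfin.mem_toFinset.2 h)
  -- apply the coarse connectivity lemma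
  obtain ⟨m, hmN, hnorm⟩ := chain Lb g lst hmem 1 N.one_mem
    (by simp only [inv_one, one_mul, hprod]; exact hpre)
  -- contradiction: m⁻¹ * g is a short element of the coset q
  have hmgq : ((m⁻¹ * g : FreeGroup (Fin 2)) : FreeGroup (Fin 2) ⧸ N) = q := by
    rw [← hgq]
    apply QuotientGroup.eq.mpr
    have h5 := ‹N.Normal›.conj_mem m hmN g⁻¹
    rw [inv_inv] at h5
    have e : (m⁻¹ * g)⁻¹ * g = g⁻¹ * m * g := by group
    rw [e]; exact h5
  exact absurd hnorm (not_le.mpr (hlong _ hmgq))
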